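/- Let n and m be positive integers, let Z_{nm} denote the additive group of residues modulo n·m, let χ_k denote the indicator function of the image of {0, 1, …, k−1} in Z_{nm}, and define τ : Z_{nm} → ℝ by τ(t) = Σ_{s ∈ Z_{nm}} χ_n(t−s)·χ_m(s). Then: (1) τ(t) = min{t+1, n+m−t−1, n, m} for 0 ≤ t ≤ n+m−2 and τ(t) = 0 for n+m−1 ≤ t ≤ nm−1 (where t denotes the residue of the integer t); and (2) for every t ∈ Z_{nm}, Σ_{s ∈ H_n} τ(t−s) = m and Σ_{s ∈ H_m} τ(t−s) = n, where H_k denotes the cyclic subgroup of Z_{nm} generated by the residue of k. -/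
import Mathlib

open Finset in
private lemma cast_eq_iff' {N : ℕ} (hN : 0 < N) {a b : ℕ} (ha : a < N) (hb : b < N) :
    ((a : ZMod N) = (b : ZMod N)) ↔ a = b := by
  rw [ZMod.natCast_eq_natCast_iff, Nat.ModEq, Nat.mod_eq_of_lt ha, Nat.mod_eq_of_lt hb]

open Finset Classical in
private lemma zmul_finset' (a b : ℕ) (ha : 0 < a) (hb : 0 < b) [NeZero (a*b)] :
    ((AddSubgroup.zmultiples ((a : ZMod (a*b)))) : Set (ZMod (a*b))).toFinset
      = (Finset.range b).image (fun j => ((j*a : ℕ) : ZMod (a*b))) := by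
  have hN : 0 < a*b := Nat.mul_pos ha hb
  ext x
  simp only [Set.mem_toFinset, SetLike.mem_coe, AddSubgroup.mem_zmultiples_iff,
    Finset.mem_image, Finset.mem_range]
  constructor
  · rintro ⟨k, rfl⟩
    set c : ℕ := (k % (a*b : ℕ)).toNat with hc
    have hck : (c : ZMod (a*b)) = (k : ZMod (a*b)) := by
      have h1 : (c : ℤ) = k % ((a*b : ℕ) : ℤ) :=
        Int.toNat_of_nonneg (Int.emod_nonneg k (by positivity))
      calc (c : ZMod (a*b)) = ((c : ℤ) : ZMod (a*b)) := by exact_mod_cast rfl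
        _ = ((k % ((a*b : ℕ) : ℤ) : ℤ) : ZMod (a*b)) := by rw [h1]
        _ = (k : ZMod (a*b)) := ZMod.intCast_mod k (a*b)
    refine ⟨c % b, Nat.mod_lt _ hb, ?_⟩
    have hmod : (c % b) * a ≡ c * a [MOD a*b] := by
      have h3 : c % b ≡ c [MOD b] := Nat.mod_modEq c b
      have := h3.mul_right' (c := a)
      rwa [mul_comm b a] at this
    calc ((c % b * a : ℕ) : ZMod (a*b)) = ((c*a : ℕ) : ZMod (a*b)) := by
          rw [ZMod.natCast_eq_natCast_iff]; exact hmod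
      _ = k • (a : ZMod (a*b)) := by
          rw [zsmul_eq_mul, ← hck, Nat.cast_mul]
  · rintro ⟨j, hj, rfl⟩
    exact ⟨(j : ℤ), by push_cast [zsmul_eq_mul]; ring⟩

open Finset Classical in
private lemma key_one' (N a b : ℕ) (ha : 0 < a) (hb : 0 < b) (hab : a * b = N)
    [NeZero N] (x : ZMod N) :
    ∑ s ∈ ((AddSubgroup.zmultiples ((a : ZMod N))) : Set (ZMod N)).toFinset,
      (if ∃ c : ℕ, c < a ∧ (c : ZMod N) = x - s then (1:ℝ) else 0) = 1 := by
  subst hab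
  have hN : 0 < a*b := Nat.mul_pos ha hb
  have hja : ∀ j, j < b → j * a < a * b := by
    intro j hj
    calc j * a < b * a := (Nat.mul_lt_mul_right ha).mpr hj
      _ = a * b := mul_comm b a
  have hinj : ∀ j1 ∈ Finset.range b, ∀ j2 ∈ Finset.range b,
      ((j1*a : ℕ) : ZMod (a*b)) = ((j2*a : ℕ) : ZMod (a*b)) → j1 = j2 := by
    intro j1 h1 j2 h2 heq
    rw [cast_eq_iff' hN (hja j1 (mem_range.mp h1)) (hja j2 (mem_range.mp h2))] at heq
    exact Nat.eq_of_mul_eq_mul_right ha heq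
  rw [zmul_finset' a b ha hb, Finset.sum_image hinj]
  set v := x.val with hv
  have hvx : ((v : ℕ) : ZMod (a*b)) = x := ZMod.natCast_rightInverse x
  have hvlt : v < a * b := ZMod.val_lt x
  have hcond : ∀ j ∈ Finset.range b,
      ((∃ c : ℕ, c < a ∧ (c : ZMod (a*b)) = x - ((j*a : ℕ) : ZMod (a*b))) ↔ j = v / a) := by
    intro j hj
    have hjb := mem_range.mp hj
    constructor
    · rintro ⟨c, hc, hceq⟩
      have hsum : ((c + j*a : ℕ) : ZMod (a*b)) = ((v : ℕ) : ZMod (a*b)) := by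
        push_cast
        rw [hvx]
        rw [eq_sub_iff_add_eq] at hceq
        push_cast at hceq
        linear_combination hceq
      have hlt : c + j * a < a * b := by
        have h1 : j * a ≤ (b-1) * a := Nat.mul_le_mul_right a (by omega)
        have h2 : (b-1) * a + a = b * a := by
          cases b with
          | zero => omega
          | succ b' => simp [Nat.succ_mul]
        have h3 : b * a = a * b := mul_comm b a
        omega
      rw [cast_eq_iff' hN hlt hvlt] at hsum
      have h4 : v / a = j := by
        rw [← hsum, Nat.add_mul_div_right c j ha, Nat.div_eq_of_lt hc, Nat.zero_add]
      exact h4.symm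
    · rintro rfl
      refine ⟨v % a, Nat.mod_lt _ ha, ?_⟩
      have h5 : ((v % a : ℕ) : ZMod (a*b)) + ((v / a * a : ℕ) : ZMod (a*b)) = x := by
        rw [← Nat.cast_add, Nat.mod_add_div']
        exact hvx
      exact eq_sub_of_add_eq h5
  rw [Finset.sum_congr rfl (fun j hj => by rw [if_congr (hcond j hj) rfl rfl])]
  rw [Finset.sum_ite_eq' (Finset.range b) (v / a) (fun _ => (1:ℝ))]
  have hmem : v / a ∈ Finset.range b := by
    rw [Finset.mem_range, Nat.div_lt_iff_lt_mul ha, mul_comm b a]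
    exact hvlt
  rw [if_pos hmem]

open Finset Classical in
private lemma chi_total' (N b : ℕ) (hN : 0 < N) (hb : b ≤ N) [NeZero N] :
    ∑ u : ZMod N, (if ∃ c : ℕ, c < b ∧ (c : ZMod N) = u then (1:ℝ) else 0) = b := by
  rw [Finset.sum_boole]
  congr 1
  have h : Finset.filter (fun u => ∃ c : ℕ, c < b ∧ (c : ZMod N) = u) Finset.univ
      = (Finset.range b).image (fun c : ℕ => (c : ZMod N)) := by
    ext u
    simp only [Finset.mem_filter, Finset.mem_univ, true_and, Finset.mem_image,
      Finset.mem_range]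
  rw [h, Finset.card_image_of_injOn, Finset.card_range]
  intro c1 h1 c2 h2 heq
  simp only [Finset.coe_range, Set.mem_Iio] at h1 h2
  exact (cast_eq_iff' hN (lt_of_lt_of_le h1 hb) (lt_of_lt_of_le h2 hb)).mp heq

open Classical in
/-- Properties of the discrete trapezoid function
`τ = χ_n ∗ χ_m` on `Z_{nm}`: its explicit values, and the fact that it tiles
`Z_{nm}` by translations along the subgroups generated by `n` and by `m`. -/
theorem discrete_trapezoid (n m : ℕ) (hn : 0 < n) (hm : 0 < m) [NeZero (n * m)]
    (χ : ℕ → ZMod (n * m) → ℝ)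
    (hχ : ∀ k t, χ k t = if ∃ a : ℕ, a < k ∧ (a : ZMod (n * m)) = t then 1 else 0)
    (τ : ZMod (n * m) → ℝ)
    (hτ : ∀ t, τ t = ∑ s : ZMod (n * m), χ n (t - s) * χ m s) :
    ((∀ t : ℕ, t ≤ n + m - 2 →
        τ (t : ZMod (n * m)) = ((min (min (t + 1) (n + m - t - 1)) (min n m) : ℕ) : ℝ)) ∧
      (∀ t : ℕ, n + m - 1 ≤ t → t ≤ n * m - 1 → τ (t : ZMod (n * m)) = 0)) ∧
    (∀ t : ZMod (n * m),
      (∑ s ∈ ((AddSubgroup.zmultiples ((n : ZMod (n * m)))) : Set (ZMod (n * m))).toFinset,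
        τ (t - s)) = (m : ℝ) ∧
      (∑ s ∈ ((AddSubgroup.zmultiples ((m : ZMod (n * m)))) : Set (ZMod (n * m))).toFinset,
        τ (t - s)) = (n : ℝ)) := by
  classical
  have hN : 0 < n * m := Nat.mul_pos hn hm
  have hnm1 : n + m ≤ n * m + 1 := by nlinarith
  have tau_eq : ∀ t : ℕ, t < n * m →
      τ (t : ZMod (n * m)) =
        ((Finset.filter (fun b => ∃ a, a < n ∧ a + b = t) (Finset.range m)).card : ℝ) := by
    intro t ht
    rw [hτ]
    simp only [hχ]
    have step1 : ∑ s : ZMod (n * m),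
        (if ∃ a, a < n ∧ (a : ZMod (n*m)) = (t : ZMod (n*m)) - s then (1:ℝ) else 0) *
          (if ∃ c, c < m ∧ (c : ZMod (n*m)) = s then (1:ℝ) else 0)
        = ∑ s ∈ Finset.filter (fun s => ∃ c, c < m ∧ (c : ZMod (n*m)) = s) Finset.univ,
            (if ∃ a, a < n ∧ (a : ZMod (n*m)) = (t : ZMod (n*m)) - s then (1:ℝ) else 0) := by
      rw [Finset.sum_filter]
      apply Finset.sum_congr rfl
      intro s _
      by_cases h : ∃ c, c < m ∧ (c : ZMod (n*m)) = s <;> simp [h]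
    rw [step1]
    have himg : Finset.filter (fun s => ∃ c, c < m ∧ (c : ZMod (n*m)) = s) Finset.univ
        = (Finset.range m).image (fun c : ℕ => (c : ZMod (n*m))) := by
      ext s
      simp only [Finset.mem_filter, Finset.mem_univ, true_and, Finset.mem_image,
        Finset.mem_range]
    have hinjm : ∀ c1 ∈ Finset.range m, ∀ c2 ∈ Finset.range m,
        ((c1 : ℕ) : ZMod (n*m)) = ((c2 : ℕ) : ZMod (n*m)) → c1 = c2 := by
      intro c1 h1 c2 h2 heq
      exact (cast_eq_iff' hN
        (lt_of_lt_of_le (Finset.mem_range.mp h1) (Nat.le_mul_of_pos_left m hn))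
        (lt_of_lt_of_le (Finset.mem_range.mp h2) (Nat.le_mul_of_pos_left m hn))).mp heq
    rw [himg, Finset.sum_image hinjm]
    have hcond : ∀ b ∈ Finset.range m,
        ((∃ a, a < n ∧ (a : ZMod (n*m)) = (t : ZMod (n*m)) - (b : ZMod (n*m))) ↔
          ∃ a, a < n ∧ a + b = t) := by
      intro b hb
      have hbm := Finset.mem_range.mp hb
      constructor
      · rintro ⟨a, ha, he⟩
        refine ⟨a, ha, ?_⟩
        have hsum : ((a + b : ℕ) : ZMod (n*m)) = ((t : ℕ) : ZMod (n*m)) := by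
          rw [eq_sub_iff_add_eq] at he
          push_cast
          linear_combination he
        have hlt : a + b < n * m := by omega
        exact (cast_eq_iff' hN hlt ht).mp hsum
      · rintro ⟨a, ha, he⟩
        refine ⟨a, ha, ?_⟩
        rw [eq_sub_iff_add_eq, ← Nat.cast_add, he]
    rw [Finset.sum_congr rfl (fun b hb => by rw [if_congr (hcond b hb) rfl rfl])]
    rw [Finset.sum_boole]
  refine ⟨⟨?_, ?_⟩, ?_⟩
  · intro t ht
    rw [tau_eq t (by omega)]
    have hset : Finset.filter (fun b => ∃ a, a < n ∧ a + b = t) (Finset.range m)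
        = Finset.Ico (t + 1 - n) (min (t + 1) m) := by
      ext b
      simp only [Finset.mem_filter, Finset.mem_range, Finset.mem_Ico, lt_min_iff]
      constructor
      · rintro ⟨hbm, a, ha1, ha2⟩; omega
      · intro h; exact ⟨by omega, t - b, by omega, by omega⟩
    rw [hset, Nat.card_Ico]
    have heq2 : min (t + 1) m - (t + 1 - n) = min (min (t + 1) (n + m - t - 1)) (min n m) := by
      omega
    rw [heq2]
  · intro t h1 h2
    rw [tau_eq t (by omega)]
    have hset : Finset.filter (fun b => ∃ a, a < n ∧ a + b = t) (Finset.range m) = ∅ := by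
      rw [Finset.filter_eq_empty_iff]
      rintro b hb ⟨a, ha, hab⟩
      have := Finset.mem_range.mp hb
      omega
    rw [hset]
    simp
  · intro t
    have main : ∀ (a b : ℕ), 0 < a → 0 < b → a * b = n * m →
        (∑ s ∈ ((AddSubgroup.zmultiples ((a : ZMod (n * m)))) : Set (ZMod (n * m))).toFinset,
          ∑ u : ZMod (n*m), χ a (t - s - u) * χ b u) = (b : ℝ) := by
      intro a b ha hb hab
      rw [Finset.sum_comm]
      have inner : ∀ u : ZMod (n*m),
          (∑ s ∈ ((AddSubgroup.zmultiples ((a : ZMod (n * m)))) : Set (ZMod (n * m))).toFinset,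
            χ a (t - s - u)) = 1 := by
        intro u
        simp only [hχ]
        have hk := key_one' (n*m) a b ha hb hab (t - u)
        have hswap : (∑ s ∈ ((AddSubgroup.zmultiples ((a : ZMod (n * m)))) :
              Set (ZMod (n * m))).toFinset,
            (if ∃ c, c < a ∧ (c : ZMod (n*m)) = t - s - u then (1:ℝ) else 0))
            = ∑ s ∈ ((AddSubgroup.zmultiples ((a : ZMod (n * m)))) :
              Set (ZMod (n * m))).toFinset,
            (if ∃ c, c < a ∧ (c : ZMod (n*m)) = t - u - s then (1:ℝ) else 0) :=
          Finset.sum_congr rfl (fun s _ => by rw [sub_right_comm])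
        exact hswap.trans hk
      calc (∑ u : ZMod (n*m),
            ∑ s ∈ ((AddSubgroup.zmultiples ((a : ZMod (n * m)))) : Set (ZMod (n * m))).toFinset,
              χ a (t - s - u) * χ b u)
          = ∑ u : ZMod (n*m),
            (∑ s ∈ ((AddSubgroup.zmultiples ((a : ZMod (n * m)))) : Set (ZMod (n * m))).toFinset,
              χ a (t - s - u)) * χ b u := by
            apply Finset.sum_congr rfl; intro u _; rw [Finset.sum_mul]
        _ = ∑ u : ZMod (n*m), χ b u := by
            apply Finset.sum_congr rfl; intro u _; rw [inner u, one_mul]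
        _ = (b : ℝ) := by
            simp only [hχ]
            apply chi_total' (n*m) b hN
            nlinarith
    constructor
    · have h1 := main n m hn hm rfl
      rw [← h1]
      apply Finset.sum_congr rfl
      intro s _
      rw [hτ]
    · have h2 := main m n hm hn (mul_comm m n)
      rw [← h2]
      apply Finset.sum_congr rfl
      intro s _
      have hcomm : ∀ x : ZMod (n*m), τ x = ∑ u : ZMod (n*m), χ m (x - u) * χ n u := by
        intro x
        rw [hτ]
        refine Finset.sum_equiv (Equiv.subLeft x) (by simp) ?_
        intro u _
        simp only [Equiv.subLeft_apply, sub_sub_cancel]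
        ring
      rw [hcomm]
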